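/- A (left) Leibniz algebra L is nilpotent if and only if every proper subalgebra of L is properly contained in its normalizer. -/

import Mathlib

set_option linter.unnecessarySimpa false

/-- The left Leibniz identity for a bilinear bracket `B`. -/
def LeibnizId {F L : Type*} [Field F] [AddCommGroup L] [Module F L]
    (B : L →ₗ[F] L →ₗ[F] L) : Prop :=
  ∀ a b c : L, B a (B b c) = B (B a b) c + B b (B a c)

/-- The span of all brackets `[s,t]` with `s ∈ S`, `t ∈ T`. -/
def lbrk {F L : Type*} [Field F] [AddCommGroup L] [Module F L]
    (B : L →ₗ[F] L →ₗ[F] L) (S T : Submodule F L) : Submodule F L :=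
  Submodule.span F {z : L | ∃ s ∈ S, ∃ t ∈ T, z = B s t}

/-- A subspace closed under the bracket. -/
def IsLeibSubalg {F L : Type*} [Field F] [AddCommGroup L] [Module F L]
    (B : L →ₗ[F] L →ₗ[F] L) (S : Submodule F L) : Prop :=
  ∀ x ∈ S, ∀ y ∈ S, B x y ∈ S

/-- A (two-sided) ideal. -/
def IsLeibIdeal {F L : Type*} [Field F] [AddCommGroup L] [Module F L]
    (B : L →ₗ[F] L →ₗ[F] L) (S : Submodule F L) : Prop :=
  (∀ x : L, ∀ y ∈ S, B x y ∈ S) ∧ (∀ y ∈ S, ∀ x : L, B y x ∈ S)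

/-- Lower central series: `L^1 = L`, `L^{n+1} = [L, L^n]`. -/
def leibLCS {F L : Type*} [Field F] [AddCommGroup L] [Module F L]
    (B : L →ₗ[F] L →ₗ[F] L) : ℕ → Submodule F L
  | 0 => ⊤
  | n + 1 => lbrk B ⊤ (leibLCS B n)

def LeibIsNilpotent {F L : Type*} [Field F] [AddCommGroup L] [Module F L]
    (B : L →ₗ[F] L →ₗ[F] L) : Prop :=
  ∃ n, leibLCS B n = ⊥

/-- Lower central series of a subalgebra `S`. -/
def leibLCSIn {F L : Type*} [Field F] [AddCommGroup L] [Module F L]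
    (B : L →ₗ[F] L →ₗ[F] L) (S : Submodule F L) : ℕ → Submodule F L
  | 0 => S
  | n + 1 => lbrk B S (leibLCSIn B S n)

/-- A subalgebra `S` is nilpotent (as an algebra in its own right). -/
def LeibSubalgNilpotent {F L : Type*} [Field F] [AddCommGroup L] [Module F L]
    (B : L →ₗ[F] L →ₗ[F] L) (S : Submodule F L) : Prop :=
  ∃ n, leibLCSIn B S n = ⊥

/-- Derived series. -/
def leibDerived {F L : Type*} [Field F] [AddCommGroup L] [Module F L]
    (B : L →ₗ[F] L →ₗ[F] L) : ℕ → Submodule F L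
  | 0 => ⊤
  | n + 1 => lbrk B (leibDerived B n) (leibDerived B n)

def LeibIsSolvable {F L : Type*} [Field F] [AddCommGroup L] [Module F L]
    (B : L →ₗ[F] L →ₗ[F] L) : Prop :=
  ∃ n, leibDerived B n = ⊥

/-- The normalizer of a subspace `S`: elements `x` with `[x,S] ⊆ S` and `[S,x] ⊆ S`. -/
def leibNormalizer {F L : Type*} [Field F] [AddCommGroup L] [Module F L]
    (B : L →ₗ[F] L →ₗ[F] L) (S : Submodule F L) : Submodule F L where
  carrier := {x : L | ∀ m ∈ S, B x m ∈ S ∧ B m x ∈ S}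
  add_mem' := by
    intro x y hx hy m hm
    constructor
    · have := S.add_mem (hx m hm).1 (hy m hm).1
      simpa [map_add] using this
    · have := S.add_mem (hx m hm).2 (hy m hm).2
      simpa [map_add] using this
  zero_mem' := by
    intro m hm
    constructor
    · simpa [map_zero] using S.zero_mem
    · simpa [map_zero] using S.zero_mem
  smul_mem' := by
    intro c x hx m hm
    constructor
    · have := S.smul_mem c (hx m hm).1
      simpa [map_smul] using this
    · have := S.smul_mem c (hx m hm).2
      simpa [map_smul] using this

/-- `Leib(L)`: the span of all squares. -/
def leibLeib {F L : Type*} [Field F] [AddCommGroup L] [Module F L]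
    (B : L →ₗ[F] L →ₗ[F] L) : Submodule F L :=
  Submodule.span F {z : L | ∃ y : L, z = B y y}

/-- A maximal (proper) subalgebra. -/
def IsMaxSubalg {F L : Type*} [Field F] [AddCommGroup L] [Module F L]
    (B : L →ₗ[F] L →ₗ[F] L) (S : Submodule F L) : Prop :=
  IsLeibSubalg B S ∧ S ≠ ⊤ ∧ ∀ T : Submodule F L, IsLeibSubalg B T → S < T → T = ⊤

/-- `N` is the core of `M`: the largest ideal of `L` contained in `M`. -/
def IsCore {F L : Type*} [Field F] [AddCommGroup L] [Module F L]
    (B : L →ₗ[F] L →ₗ[F] L) (M N : Submodule F L) : Prop :=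
  IsLeibIdeal B N ∧ N ≤ M ∧ ∀ C : Submodule F L, IsLeibIdeal B C → C ≤ M → C ≤ N

/-- Minimal nonnilpotent: nonnilpotent, solvable, all proper subalgebras nilpotent. -/
def MinNonnilpotent {F L : Type*} [Field F] [AddCommGroup L] [Module F L]
    (B : L →ₗ[F] L →ₗ[F] L) : Prop :=
  ¬ LeibIsNilpotent B ∧ LeibIsSolvable B ∧
    ∀ S : Submodule F L, IsLeibSubalg B S → S ≠ ⊤ → LeibSubalgNilpotent B S

/-- Cyclic: generated as an algebra by a single element. -/
def LeibCyclic {F L : Type*} [Field F] [AddCommGroup L] [Module F L]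
    (B : L →ₗ[F] L →ₗ[F] L) : Prop :=
  ∃ z : L, ∀ S : Submodule F L, IsLeibSubalg B S → z ∈ S → S = ⊤

section NilpAux

variable {F L : Type*} [Field F] [AddCommGroup L] [Module F L]

theorem mem_lbrk_aux (B : L →ₗ[F] L →ₗ[F] L) {S T : Submodule F L} {s t : L}
    (hs : s ∈ S) (ht : t ∈ T) : B s t ∈ lbrk B S T :=
  Submodule.subset_span ⟨s, hs, t, ht, rfl⟩

theorem lbrk_le_aux {B : L →ₗ[F] L →ₗ[F] L} {S T U : Submodule F L}
    (h : ∀ s ∈ S, ∀ t ∈ T, B s t ∈ U) : lbrk B S T ≤ U := by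
  apply Submodule.span_le.2
  rintro z ⟨s, hs, t, ht, rfl⟩
  exact h s hs t ht

theorem leibLCS_succ_aux (B : L →ₗ[F] L →ₗ[F] L) (n : ℕ) :
    leibLCS B (n + 1) = lbrk B ⊤ (leibLCS B n) := rfl

theorem lcs_lbrk_aux {B : L →ₗ[F] L →ₗ[F] L} (hB : LeibnizId B) :
    ∀ i j, lbrk B (leibLCS B i) (leibLCS B j) ≤ leibLCS B (i + j + 1) := by
  intro i
  induction i with
  | zero =>
    intro j
    rw [Nat.zero_add]
    exact le_of_eq (leibLCS_succ_aux B j).symm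
  | succ i ih =>
    intro j
    apply lbrk_le_aux
    intro s hs t ht
    rw [leibLCS_succ_aux] at hs
    induction hs using Submodule.span_induction with
    | mem z hz =>
      obtain ⟨a, -, u, hu, rfl⟩ := hz
      have h1 : B u t ∈ leibLCS B (i + j + 1) := ih j (mem_lbrk_aux B hu ht)
      have h2 : B a (B u t) ∈ leibLCS B (i + j + 1 + 1) :=
        (leibLCS_succ_aux B (i + j + 1)).symm ▸ mem_lbrk_aux B Submodule.mem_top h1
      have h3 : B a t ∈ leibLCS B (j + 1) :=
        (leibLCS_succ_aux B j).symm ▸ mem_lbrk_aux B Submodule.mem_top ht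
      have h4 : B u (B a t) ∈ leibLCS B (i + (j + 1) + 1) := ih (j + 1) (mem_lbrk_aux B hu h3)
      have key : B (B a u) t = B a (B u t) - B u (B a t) := by
        rw [hB a u t]; abel
      rw [key]
      have e2 : i + j + 1 + 1 = i + 1 + j + 1 := by omega
      have e1 : i + (j + 1) + 1 = i + 1 + j + 1 := by omega
      exact Submodule.sub_mem _ (e2 ▸ h2) (e1 ▸ h4)
    | zero => simp
    | add y z hy hz hy' hz' =>
      rw [map_add, LinearMap.add_apply]
      exact Submodule.add_mem _ hy' hz'
    | smul c y hy hy' =>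
      rw [map_smul, LinearMap.smul_apply]
      exact Submodule.smul_mem _ c hy'

theorem fpow_brk_aux {B : L →ₗ[F] L →ₗ[F] L} (hB : LeibnizId B) (x : L) :
    ∀ (s p q : ℕ), p + q = s → ∀ a b : L, ((B x) ^ p) a = 0 → ((B x) ^ q) b = 0 →
      ((B x) ^ s) (B a b) = 0 := by
  intro s
  induction s with
  | zero =>
    intro p q hpq a b ha hb
    obtain ⟨rfl, rfl⟩ : p = 0 ∧ q = 0 := by omega
    simp only [pow_zero, Module.End.one_apply] at ha hb ⊢
    rw [ha, map_zero, LinearMap.zero_apply]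
  | succ s ih =>
    intro p q hpq a b ha hb
    cases p with
    | zero =>
      simp only [pow_zero, Module.End.one_apply] at ha
      rw [ha, map_zero, LinearMap.zero_apply, map_zero]
    | succ p' =>
      cases q with
      | zero =>
        simp only [pow_zero, Module.End.one_apply] at hb
        rw [hb, map_zero, map_zero]
      | succ q' =>
        have hs : ((B x) ^ (s + 1)) (B a b) = ((B x) ^ s) ((B x) (B a b)) := by
          rw [pow_succ]; rfl
        rw [hs, hB x a b, map_add]
        have h1 : ((B x) ^ s) (B ((B x) a) b) = 0 := by
          apply ih p' (q' + 1) (by omega)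
          · rw [← Module.End.mul_apply, ← pow_succ]
            exact ha
          · exact hb
        have h2 : ((B x) ^ s) (B a ((B x) b)) = 0 := by
          apply ih (p' + 1) q' (by omega)
          · exact ha
          · rw [← Module.End.mul_apply, ← pow_succ]
            exact hb
        rw [h1, h2, add_zero]

theorem ker_pow_stab_aux [FiniteDimensional F L] (f : Module.End F L) :
    ∃ n : ℕ, 1 ≤ n ∧ ∀ m, n ≤ m → LinearMap.ker (f ^ m) = LinearMap.ker (f ^ n) := by
  have hmono : ∀ p q, p ≤ q → LinearMap.ker (f ^ p) ≤ LinearMap.ker (f ^ q) := by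
    intro p q hpq z hz
    rw [LinearMap.mem_ker] at hz ⊢
    have he : f ^ q = f ^ (q - p) * f ^ p := by rw [← pow_add]; congr 1; omega
    rw [he, Module.End.mul_apply, hz, map_zero]
  have hstep : ∃ n0, LinearMap.ker (f ^ (n0 + 1)) = LinearMap.ker (f ^ n0) := by
    by_contra hcon
    push_neg at hcon
    have hlt : ∀ n, LinearMap.ker (f ^ n) < LinearMap.ker (f ^ (n + 1)) :=
      fun n => lt_of_le_of_ne (hmono n (n + 1) (by omega)) (fun h => hcon n h.symm)
    have hrank : ∀ n, n ≤ Module.finrank F (LinearMap.ker (f ^ n)) := by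
      intro n
      induction n with
      | zero => exact Nat.zero_le _
      | succ n ihn =>
        have := Submodule.finrank_lt_finrank_of_lt (hlt n)
        omega
    have h1 := hrank (Module.finrank F L + 1)
    have h2 := Submodule.finrank_le (LinearMap.ker (f ^ (Module.finrank F L + 1)))
    omega
  obtain ⟨n0, hn0⟩ := hstep
  have hall : ∀ d, LinearMap.ker (f ^ (n0 + d)) = LinearMap.ker (f ^ n0) := by
    intro d
    induction d with
    | zero => rfl
    | succ d ihd =>
      apply le_antisymm
      · intro z hz
        rw [LinearMap.mem_ker] at hz
        have hz2 : (f ^ (n0 + 1)) ((f ^ d) z) = 0 := by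
          rw [← Module.End.mul_apply, ← pow_add, show n0 + 1 + d = n0 + (d + 1) from by omega]
          exact hz
        have hz3 : ((f ^ d) z) ∈ LinearMap.ker (f ^ (n0 + 1)) := hz2
        rw [hn0, LinearMap.mem_ker] at hz3
        have hz4 : z ∈ LinearMap.ker (f ^ (n0 + d)) := by
          rw [LinearMap.mem_ker, pow_add, Module.End.mul_apply]
          exact hz3
        exact ihd ▸ hz4
      · exact hmono n0 (n0 + (d + 1)) (by omega)
  refine ⟨n0 + 1, by omega, ?_⟩
  intro m hm
  have h1 := hall (m - n0)
  rw [show n0 + (m - n0) = m from by omega] at h1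
  rw [h1, ← hall 1]

end NilpAux

section NilpAux2

variable {F L : Type*} [Field F] [AddCommGroup L] [Module F L]

theorem leib_forward_aux [FiniteDimensional F L] {B : L →ₗ[F] L →ₗ[F] L} (hB : LeibnizId B)
    (hnil : LeibIsNilpotent B) (S : Submodule F L) (hS : IsLeibSubalg B S) (hne : S ≠ ⊤) :
    S < leibNormalizer B S := by
  classical
  obtain ⟨n, hn⟩ := hnil
  have hex : ∃ k, leibLCS B k ≤ S := ⟨n, le_of_eq_of_le hn bot_le⟩
  have hk : leibLCS B (Nat.find hex) ≤ S := Nat.find_spec hex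
  have hk0 : Nat.find hex ≠ 0 := by
    intro h0
    rw [h0] at hk
    exact hne (top_le_iff.mp hk)
  obtain ⟨k', hk'⟩ := Nat.exists_eq_succ_of_ne_zero hk0
  rw [hk'] at hk
  have hmin : ¬ leibLCS B k' ≤ S := Nat.find_min hex (by omega)
  obtain ⟨z, hz, hzS⟩ := SetLike.not_le_iff_exists.mp hmin
  have hzN : z ∈ leibNormalizer B S := by
    show ∀ m ∈ S, B z m ∈ S ∧ B m z ∈ S
    intro m hm
    constructor
    · have h1 : B z m ∈ lbrk B (leibLCS B k') (leibLCS B 0) :=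
        mem_lbrk_aux B hz Submodule.mem_top
      have h2 := lcs_lbrk_aux hB k' 0 h1
      rw [show k' + 0 + 1 = k' + 1 from by omega] at h2
      exact hk h2
    · have h1 : B m z ∈ leibLCS B (k' + 1) :=
        (leibLCS_succ_aux B k').symm ▸ mem_lbrk_aux B Submodule.mem_top hz
      exact hk h1
  have hSN : S ≤ leibNormalizer B S := by
    intro m hm
    show ∀ m' ∈ S, B m m' ∈ S ∧ B m' m ∈ S
    intro m' hm'
    exact ⟨hS m hm m' hm', hS m' hm' m hm⟩
  exact SetLike.lt_iff_le_and_exists.mpr ⟨hSN, z, hzN, hzS⟩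

attribute [local instance] LieRing.ofAssociativeRing

theorem engel_aux [FiniteDimensional F L] (B : L →ₗ[F] L →ₗ[F] L) (hB : LeibnizId B)
    (A : Submodule F L) (hAA : lbrk B ⊤ A = A) (hA : A ≠ ⊥) :
    ∃ x : L, ¬ IsNilpotent (B x : Module.End F L) := by
  classical
  by_contra hcon
  push_neg at hcon
  have hres : ∀ (y : L), ∀ a ∈ A, B y a ∈ A := fun y a ha =>
    hAA ▸ mem_lbrk_aux B Submodule.mem_top ha
  let φ : L →ₗ[F] Module.End F ↥A :=
    { toFun := fun y => LinearMap.restrict (B y) (hres y)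
      map_add' := by
        intro y z
        apply LinearMap.ext; intro a; apply Subtype.ext
        simp [LinearMap.restrict_coe_apply, map_add, LinearMap.add_apply]
      map_smul' := by
        intro c y
        apply LinearMap.ext; intro a; apply Subtype.ext
        simp [LinearMap.restrict_coe_apply, map_smul, LinearMap.smul_apply,
          RingHom.id_apply, SetLike.val_smul] }
  have hφcoe : ∀ (y : L) (a : ↥A), ((φ y) a : L) = B y (a : L) := fun y a => rfl
  have hφpow : ∀ (y : L) (k : ℕ) (a : ↥A), (((φ y) ^ k) a : L) = ((B y) ^ k) (a : L) := by
    intro y k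
    induction k with
    | zero => intro a; simp
    | succ k ih =>
      intro a
      have h1 : ((φ y) ^ (k + 1)) a = ((φ y) ^ k) ((φ y) a) := by rw [pow_succ]; rfl
      have h2 : ((B y) ^ (k + 1)) (a : L) = ((B y) ^ k) ((B y) (a : L)) := by
        rw [pow_succ]; rfl
      rw [h1, h2, ih ((φ y) a), hφcoe y a]
  have hφnil : ∀ y : L, IsNilpotent (φ y) := by
    intro y
    obtain ⟨n, hn⟩ := hcon y
    refine ⟨n, ?_⟩
    apply LinearMap.ext; intro a; apply Subtype.ext
    rw [show ((0 : Module.End F ↥A) a : L) = 0 from rfl, hφpow y n a, hn,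
      LinearMap.zero_apply]
  let g : LieSubalgebra F (Module.End F ↥A) :=
    { LinearMap.range φ with
      lie_mem' := by
        intro u w hu hw
        obtain ⟨y, rfl⟩ := hu
        obtain ⟨z, rfl⟩ := hw
        refine ⟨B y z, ?_⟩
        apply LinearMap.ext; intro a; apply Subtype.ext
        have key := hB y z (a : L)
        rw [Ring.lie_def]
        show B (B y z) (a : L) = ((φ y * φ z) a - (φ z * φ y) a : L)
        rw [Module.End.mul_apply, Module.End.mul_apply]
        show B (B y z) (a : L) = B y (B z (a : L)) - B z (B y (a : L))
        rw [key]; abel }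
  haveI hgfd : FiniteDimensional F ↥g :=
    inferInstanceAs (FiniteDimensional F ↥(LinearMap.range φ))
  haveI : IsNoetherian F ↥g := IsNoetherian.iff_fg.mpr inferInstance
  have hnilmod : LieModule.IsNilpotent ↥g ↥A := by
    apply LieAlgebra.isEngelian_of_isNoetherian (R := F) (L := ↥g)
    intro ξ
    obtain ⟨y, hy⟩ := LinearMap.mem_range.mp ξ.2
    have hEnd : LieModule.toEnd F ↥g ↥A ξ = ξ.1 := by
      apply LinearMap.ext; intro a
      rfl
    rw [hEnd, ← hy]
    exact hφnil y
  have htop : ∀ k, LieModule.lowerCentralSeries F ↥g ↥A k = ⊤ := by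
    intro k
    induction k with
    | zero => rfl
    | succ k ih =>
      rw [LieModule.lowerCentralSeries_succ, ih]
      apply le_antisymm le_top
      intro a _
      have haux : ∀ z, z ∈ lbrk B ⊤ A → ∀ h : z ∈ A,
          (⟨z, h⟩ : ↥A) ∈ ⁅(⊤ : LieIdeal F ↥g), (⊤ : LieSubmodule F ↥g ↥A)⁆ := by
        intro z hz
        induction hz using Submodule.span_induction with
        | mem w hw =>
          intro h
          obtain ⟨s, -, t, ht, rfl⟩ := hw
          have heq : (⟨B s t, h⟩ : ↥A) =
              ⁅(⟨φ s, LinearMap.mem_range.mpr ⟨s, rfl⟩⟩ : ↥g), (⟨t, ht⟩ : ↥A)⁆ :=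
            Subtype.ext rfl
          rw [heq]
          exact LieSubmodule.lie_mem_lie (LieSubmodule.mem_top _) (LieSubmodule.mem_top _)
        | zero =>
          intro h
          have heq : (⟨(0 : L), h⟩ : ↥A) = 0 := Subtype.ext rfl
          rw [heq]
          exact LieSubmodule.zero_mem _
        | add y z hy hz hy' hz' =>
          intro h
          have hyA : y ∈ A := hAA ▸ (hy : y ∈ lbrk B ⊤ A)
          have hzA : z ∈ A := hAA ▸ (hz : z ∈ lbrk B ⊤ A)
          have heq : (⟨y + z, h⟩ : ↥A) = (⟨y, hyA⟩ : ↥A) + (⟨z, hzA⟩ : ↥A) := Subtype.ext rfl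
          rw [heq]
          exact add_mem (hy' hyA) (hz' hzA)
        | smul c y hy hy' =>
          intro h
          have hyA : y ∈ A := hAA ▸ (hy : y ∈ lbrk B ⊤ A)
          have heq : (⟨c • y, h⟩ : ↥A) = c • (⟨y, hyA⟩ : ↥A) := Subtype.ext rfl
          rw [heq]
          exact SMulMemClass.smul_mem c (hy' hyA)
      have ha2 : (a : L) ∈ lbrk B ⊤ A := by rw [hAA]; exact a.2
      have := haux (a : L) ha2 a.2
      simpa using this
  obtain ⟨k, hk⟩ := (LieModule.isNilpotent_iff F ↥g ↥A).mp hnilmod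
  rw [htop k] at hk
  obtain ⟨a0, ha0A, ha0⟩ := Submodule.exists_mem_ne_zero_of_ne_bot hA
  have hmem : (⟨a0, ha0A⟩ : ↥A) ∈ (⊤ : LieSubmodule F ↥g ↥A) := LieSubmodule.mem_top _
  rw [hk] at hmem
  have := (LieSubmodule.mem_bot (R := F) (L := ↥g) (M := ↥A) _).mp hmem
  exact ha0 (by simpa using congrArg Subtype.val this)

end NilpAux2

/-- A finite-dimensional left Leibniz algebra is nilpotent iff every proper
subalgebra is properly contained in its normalizer. -/
theorem stmt0 {F L : Type*} [Field F] [AddCommGroup L] [Module F L] [FiniteDimensional F L]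
    (B : L →ₗ[F] L →ₗ[F] L) (hB : LeibnizId B) :
    LeibIsNilpotent B ↔
      ∀ S : Submodule F L, IsLeibSubalg B S → S ≠ ⊤ → S < leibNormalizer B S := by
  constructor
  · intro hnil S hS hne
    exact leib_forward_aux hB hnil S hS hne
  · intro hyp
    have hlcsmono : ∀ n, leibLCS B (n + 1) ≤ leibLCS B n := by
      intro n
      induction n with
      | zero => exact le_top
      | succ n ih =>
        rw [leibLCS_succ_aux, leibLCS_succ_aux]
        apply Submodule.span_mono
        rintro z ⟨s, hs, t, ht, rfl⟩
        exact ⟨s, hs, t, ih ht, rfl⟩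
    have hstab : ∃ N, leibLCS B (N + 1) = leibLCS B N := by
      by_contra hcon
      push_neg at hcon
      have hlt : ∀ n, leibLCS B (n + 1) < leibLCS B n :=
        fun n => lt_of_le_of_ne (hlcsmono n) (hcon n)
      have hrank : ∀ n, Module.finrank F (leibLCS B n) + n ≤ Module.finrank F L := by
        intro n
        induction n with
        | zero => simpa using Submodule.finrank_le (leibLCS B 0)
        | succ n ih =>
          have := Submodule.finrank_lt_finrank_of_lt (hlt n)
          omega
      have := hrank (Module.finrank F L + 1)
      omega
    obtain ⟨N, hN⟩ := hstab
    by_cases hbot : leibLCS B N = ⊥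
    · exact ⟨N, hbot⟩
    exfalso
    have hAA : lbrk B ⊤ (leibLCS B N) = leibLCS B N := (leibLCS_succ_aux B N) ▸ hN
    obtain ⟨x, hx⟩ := engel_aux B hB (leibLCS B N) hAA hbot
    set f : Module.End F L := (B x : L →ₗ[F] L) with hfdef
    obtain ⟨n, hn1, hker⟩ := ker_pow_stab_aux f
    set L0 : Submodule F L := LinearMap.ker (f ^ n) with hL0
    have hL0ne : L0 ≠ ⊤ := by
      intro h
      exact hx ⟨n, LinearMap.ker_eq_top.mp h⟩
    have hL0sub : IsLeibSubalg B L0 := by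
      intro a ha b hb
      have h2 : (f ^ (n + n)) (B a b) = 0 :=
        fpow_brk_aux hB x (n + n) n n rfl a b (LinearMap.mem_ker.mp ha) (LinearMap.mem_ker.mp hb)
      have h3 : B a b ∈ LinearMap.ker (f ^ (n + n)) := LinearMap.mem_ker.mpr h2
      rw [hker (n + n) (by omega)] at h3
      exact h3
    -- powers of x are left annihilating
    have hxp_ann : ∀ k, ∀ w, B ((f ^ (k + 1)) x) w = 0 := by
      intro k
      induction k with
      | zero =>
        intro w
        have key := hB x x w
        have h2 : B (B x x) w + B x (B x w) = 0 + B x (B x w) := by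
          rw [zero_add]; exact key.symm
        have h3 : B (B x x) w = 0 := add_right_cancel h2
        simpa [pow_one] using h3
      | succ k ih =>
        intro w
        have hfk : (f ^ (k + 1 + 1)) x = B x ((f ^ (k + 1)) x) := by
          rw [pow_succ']; rfl
        rw [hfk]
        have key := hB x ((f ^ (k + 1)) x) w
        rw [ih w, map_zero, ih (B x w), add_zero] at key
        exact key.symm
    set v : L := (f ^ n) x with hv
    set W : Submodule F L := Submodule.span F (Set.range fun j : ℕ => (f ^ j) v) with hW
    have hWann : ∀ w ∈ W, ∀ z, B w z = 0 := by
      intro w hw z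
      induction hw using Submodule.span_induction with
      | mem y hy =>
        obtain ⟨j, rfl⟩ := hy
        show B ((f ^ j) v) z = 0
        have he : (f ^ j) v = (f ^ (j + n)) x := by
          rw [hv, ← Module.End.mul_apply, ← pow_add]
        rw [he]
        have h2 := hxp_ann (j + n - 1)
        rw [show j + n - 1 + 1 = j + n from by omega] at h2
        exact h2 z
      | zero => rw [map_zero, LinearMap.zero_apply]
      | add a b ha hb ha' hb' => rw [map_add, LinearMap.add_apply, ha', hb', add_zero]
      | smul c a ha ha' => rw [map_smul, LinearMap.smul_apply, ha', smul_zero]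
    have hWinvt : ∀ w ∈ W, f w ∈ W := by
      intro w hw
      induction hw using Submodule.span_induction with
      | mem y hy =>
        obtain ⟨j, rfl⟩ := hy
        refine Submodule.subset_span ⟨j + 1, ?_⟩
        show (f ^ (j + 1)) v = f ((f ^ j) v)
        rw [pow_succ']; rfl
      | zero => rw [map_zero]; exact W.zero_mem
      | add a b ha hb ha' hb' => rw [map_add]; exact W.add_mem ha' hb'
      | smul c a ha ha' => rw [map_smul]; exact W.smul_mem c ha'
    have hWrange : W ≤ LinearMap.range (f ^ n) := by
      apply Submodule.span_le.2
      rintro z ⟨j, rfl⟩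
      show (f ^ j) v ∈ LinearMap.range (f ^ n)
      refine ⟨(f ^ j) x, ?_⟩
      have e : (f ^ n) * (f ^ j) = (f ^ j) * (f ^ n) := by
        rw [← pow_add, ← pow_add, Nat.add_comm]
      calc (f ^ n) ((f ^ j) x) = ((f ^ n) * (f ^ j)) x := rfl
        _ = ((f ^ j) * (f ^ n)) x := by rw [e]
        _ = (f ^ j) v := by rw [hv]; rfl
    have hWinj : ∀ w ∈ W, f w = 0 → w = 0 := by
      intro w hw hfw
      obtain ⟨u, hu⟩ := hWrange hw
      have h1 : (f ^ (n + 1)) u = 0 := by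
        rw [pow_succ', Module.End.mul_apply, hu, hfw]
      have hu2 : u ∈ LinearMap.ker (f ^ (n + 1)) := LinearMap.mem_ker.mpr h1
      rw [hker (n + 1) (by omega)] at hu2
      rw [← hu]
      exact LinearMap.mem_ker.mp hu2
    let e : ↥W →ₗ[F] ↥W := f.restrict (fun w hw => hWinvt w hw)
    have heinj : Function.Injective e := by
      rw [← LinearMap.ker_eq_bot]
      apply (Submodule.eq_bot_iff _).mpr
      intro a ha
      have h0 : f (a : L) = 0 := congrArg Subtype.val (LinearMap.mem_ker.mp ha)
      exact Subtype.ext (hWinj (a : L) a.2 h0)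
    have hesurj : Function.Surjective e := LinearMap.injective_iff_surjective.mp heinj
    have hvW : v ∈ W := Submodule.subset_span ⟨0, by show (f ^ 0) v = v; rw [pow_zero]; rfl⟩
    have hx1ex : ∀ k : ℕ, ∃ u ∈ W, (f ^ k) u = v := by
      intro k
      induction k with
      | zero => exact ⟨v, hvW, by rw [pow_zero]; rfl⟩
      | succ k ih =>
        obtain ⟨u, huW, hu⟩ := ih
        obtain ⟨w, hw⟩ := hesurj ⟨u, huW⟩
        refine ⟨(w : L), w.2, ?_⟩
        have hfw : f (w : L) = u := congrArg Subtype.val hw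
        rw [pow_succ, Module.End.mul_apply, hfw, hu]
    obtain ⟨x₁, hx1W, hx1⟩ := hx1ex n
    have hx0 : x - x₁ ∈ L0 := by
      apply LinearMap.mem_ker.mpr
      rw [map_sub, hx1, ← hv, sub_self]
    have hx1ann : ∀ z, B x₁ z = 0 := fun z => hWann x₁ hx1W z
    have hNle : leibNormalizer B L0 ≤ L0 := by
      intro y hy
      have hy' : ∀ m ∈ L0, B y m ∈ L0 ∧ B m y ∈ L0 := hy
      have h1 : B (x - x₁) y ∈ L0 := (hy' (x - x₁) hx0).2
      have h2 : B (x - x₁) y = f y := by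
        rw [map_sub, LinearMap.sub_apply, hx1ann y, sub_zero]
      rw [h2] at h1
      have h3 : (f ^ (n + 1)) y = 0 := by
        rw [pow_succ, Module.End.mul_apply]
        exact LinearMap.mem_ker.mp h1
      have h4 : y ∈ LinearMap.ker (f ^ (n + 1)) := LinearMap.mem_ker.mpr h3
      rw [hker (n + 1) (by omega)] at h4
      exact h4
    have hlt := hyp L0 hL0sub hL0ne
    exact lt_irrefl L0 (lt_of_lt_of_le hlt hNle)
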